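/- arXiv:1706.07832 — 2 statements merged into one kernel-verified Lean document; each statement's English description precedes it below -/
import Mathlib

section
/- Let L be an n×n real symmetric positive semidefinite matrix with L𝟙 = 0 whose kernel is exactly the span of the all-ones vector 𝟙, with eigenvalues 0 = λ₁ < λ₂ ≤ … ≤ λₙ, and let M = I − (1/n)J where J is the all-ones matrix. Then for every t ≥ 0, the expected transient output covariance satisfies tr( ∫₀ᵗ e^{−Lτ} M e^{−Lτ} dτ ) = Σ_{i=2}^{n} (1 − e^{−2λ_i t})/(2λ_i). -/
open Filter Finset Matrix

/-- The eigenvalues of a real matrix, listed in increasing order (counted with multiplicity);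
junk value `0` if the matrix is not symmetric. -/
noncomputable def sortedEigenvalues {n : ℕ} (A : Matrix (Fin n) (Fin n) ℝ) : Fin n → ℝ :=
  if hA : A.IsHermitian then hA.eigenvalues ∘ Tuple.sort hA.eigenvalues else fun _ => 0

/-- `L` is the Laplacian matrix of a connected weighted graph: symmetric positive semidefinite,
`L 𝟙 = 0`, and the kernel of `L` is exactly the span of the all-ones vector. -/
def IsConnLaplacian {n : ℕ} (L : Matrix (Fin n) (Fin n) ℝ) : Prop :=
  L.PosSemidef ∧ (L *ᵥ (fun _ => (1 : ℝ)) = 0) ∧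
    ∀ v : Fin n → ℝ, L *ᵥ v = 0 → ∃ c : ℝ, v = fun _ => c

/-- The all-ones `n × n` matrix `J`. -/
def Jmat (n : ℕ) : Matrix (Fin n) (Fin n) ℝ := Matrix.of fun _ _ => (1 : ℝ)

lemma integral_exp_neg_two_mul (a t : ℝ) (ha : a ≠ 0) :
    ∫ τ in (0:ℝ)..t, Real.exp (-2 * a * τ) =
      (1 - Real.exp (-2 * a * t)) / (2 * a) := by
  have hc : (-2 * a) ≠ 0 := mul_ne_zero (by norm_num) ha
  rw [intervalIntegral.integral_comp_mul_left Real.exp hc, mul_zero, integral_exp,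
    Real.exp_zero, smul_eq_mul]
  field_simp
  ring

/-- Expected transient output covariance: the trace of the (entrywise) integral
`∫₀ᵗ e^{−Lτ} M e^{−Lτ} dτ` equals `Σ_{i=2}^n (1 − e^{−2λ_i t})/(2λ_i)`. -/
theorem trace_transient_output_covariance {n : ℕ}
    (L : Matrix (Fin n) (Fin n) ℝ) (hL : IsConnLaplacian L) (t : ℝ) (ht : 0 ≤ t) :
    ∑ i : Fin n,
        ∫ τ in (0 : ℝ)..t,
          ((NormedSpace.exp (-(τ • L))) * ((1 : Matrix (Fin n) (Fin n) ℝ) -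
              (1 / (n : ℝ)) • Jmat n) * (NormedSpace.exp (-(τ • L)))) i i =
      ∑ i ∈ Finset.univ.filter (fun i : Fin n => 1 ≤ (i : ℕ)),
        (1 - Real.exp (-2 * sortedEigenvalues L i * t)) / (2 * sortedEigenvalues L i) := by
  classical
  rcases Nat.eq_zero_or_pos n with hn | hn
  · subst hn
    simp
  haveI : NeZero n := ⟨hn.ne'⟩
  obtain ⟨hPSD, h1, hker⟩ := hL
  have hH : L.IsHermitian := hPSD.1
  set ev : Fin n → ℝ := hH.eigenvalues with hev
  set σ : Equiv.Perm (Fin n) := Tuple.sort ev with hσ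
  set U : Matrix (Fin n) (Fin n) ℝ := (hH.eigenvectorUnitary : Matrix (Fin n) (Fin n) ℝ)
    with hUdef
  set V : Matrix (Fin n) (Fin n) ℝ := star U with hVdef
  have hUV : U * V = 1 := Matrix.mem_unitaryGroup_iff.mp hH.eigenvectorUnitary.2
  have hVU : V * U = 1 := Matrix.mem_unitaryGroup_iff'.mp hH.eigenvectorUnitary.2
  have hspec : L = U * Matrix.diagonal ev * V := by
    have h := hH.spectral_theorem
    simpa [RCLike.ofReal_real_eq_id, Function.id_comp] using h
  have hnn : (n : ℝ) ≠ 0 := by exact_mod_cast hn.ne'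
  -- exponential formula
  have hexp : ∀ c : ℝ, NormedSpace.exp (c • L) =
      U * Matrix.diagonal (fun k => Real.exp (c * ev k)) * V := by
    intro c
    have hsm : c • L = U * Matrix.diagonal (fun k => c * ev k) * V := by
      rw [hspec]
      have : Matrix.diagonal (fun k => c * ev k) = c • Matrix.diagonal ev := by
        rw [← Matrix.diagonal_smul]
        rfl
      rw [this, mul_smul_comm, smul_mul_assoc]
    haveI : Invertible U := ⟨V, hVU, hUV⟩
    have hUinv : U⁻¹ = V := Matrix.inv_eq_right_inv hUV
    rw [hsm, ← hUinv, Matrix.exp_conj U _ (isUnit_of_invertible U), Matrix.exp_diagonal,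
      hUinv]
    congr 1
    congr 1
    funext k
    simp [Pi.exp_def, ← Real.exp_eq_exp_ℝ]
  -- kernel facts
  have hw : ∀ m, ev m * (V *ᵥ fun _ => (1:ℝ)) m = 0 := by
    intro m
    have h2 : (Matrix.diagonal ev * V) *ᵥ (fun _ => (1:ℝ)) = 0 := by
      have hL1 : L *ᵥ (fun _ => (1:ℝ)) = 0 := h1
      rw [hspec] at hL1
      have h3 : V *ᵥ ((U * Matrix.diagonal ev * V) *ᵥ fun _ => (1:ℝ)) = 0 := by
        rw [hL1, Matrix.mulVec_zero]
      rw [Matrix.mulVec_mulVec] at h3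
      rwa [← Matrix.mul_assoc, ← Matrix.mul_assoc, hVU, Matrix.one_mul] at h3
    have h4 := congr_fun h2 m
    rw [← Matrix.mulVec_mulVec, Matrix.mulVec_diagonal] at h4
    simpa using h4
  have hexpvec : ∀ c : ℝ, NormedSpace.exp (c • L) *ᵥ (fun _ => (1:ℝ)) = fun _ => (1:ℝ) := by
    intro c
    rw [hexp c, ← Matrix.mulVec_mulVec, ← Matrix.mulVec_mulVec]
    have hDw : Matrix.diagonal (fun k => Real.exp (c * ev k)) *ᵥ (V *ᵥ fun _ => (1:ℝ))
        = V *ᵥ (fun _ => (1:ℝ)) := by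
      funext m
      rw [Matrix.mulVec_diagonal]
      rcases mul_eq_zero.mp (hw m) with h | h
      · rw [h, mul_zero, Real.exp_zero, one_mul]
      · rw [h, mul_zero]
    rw [hDw, Matrix.mulVec_mulVec, hUV, Matrix.one_mulVec]
  have hEJ : ∀ c : ℝ, NormedSpace.exp (c • L) * Jmat n = Jmat n := by
    intro c
    ext i j
    have h := congr_fun (hexpvec c) i
    simp only [Matrix.mulVec, dotProduct, mul_one] at h
    simpa [Matrix.mul_apply, Jmat] using h
  have hLT : Lᵀ = L := by
    ext i j
    conv_rhs => rw [← hH.eq]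
    simp [Matrix.conjTranspose_apply, Matrix.transpose_apply]
  have hsymmE : ∀ c : ℝ, (NormedSpace.exp (c • L))ᵀ = NormedSpace.exp (c • L) := by
    intro c
    rw [← Matrix.exp_transpose, Matrix.transpose_smul, hLT]
  have hJT : (Jmat n)ᵀ = Jmat n := by ext i j; rfl
  have hJE : ∀ c : ℝ, Jmat n * NormedSpace.exp (c • L) = Jmat n := by
    intro c
    calc Jmat n * NormedSpace.exp (c • L)
        = ((NormedSpace.exp (c • L))ᵀ * (Jmat n)ᵀ)ᵀ := by
          rw [← Matrix.transpose_mul, Matrix.transpose_transpose]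
      _ = Jmat n := by rw [hsymmE, hJT, hEJ, hJT]
  -- the key matrix identity
  have hmul : ∀ τ : ℝ,
      (NormedSpace.exp (-(τ • L))) * ((1 : Matrix (Fin n) (Fin n) ℝ) -
          (1 / (n : ℝ)) • Jmat n) * (NormedSpace.exp (-(τ • L))) =
        U * Matrix.diagonal (fun k => Real.exp (-2 * ev k * τ)) * V
          - (1 / (n : ℝ)) • Jmat n := by
    intro τ
    rw [← neg_smul]
    rw [Matrix.mul_sub, Matrix.mul_one, Matrix.sub_mul]
    rw [mul_smul_comm, smul_mul_assoc, hEJ, hJE]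
    congr 1
    rw [hexp]
    have hDD : Matrix.diagonal (fun k => Real.exp (-τ * ev k)) *
        Matrix.diagonal (fun k => Real.exp (-τ * ev k)) =
        Matrix.diagonal (fun k => Real.exp (-2 * ev k * τ)) := by
      have harg : (fun k => Real.exp (-τ * ev k) * Real.exp (-τ * ev k))
          = fun k => Real.exp (-2 * ev k * τ) := by
        funext k
        rw [← Real.exp_add]
        congr 1
        ring
      rw [Matrix.diagonal_mul_diagonal, harg]
    calc (U * Matrix.diagonal (fun k => Real.exp (-τ * ev k)) * V) *
          (U * Matrix.diagonal (fun k => Real.exp (-τ * ev k)) * V)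
        = U * (Matrix.diagonal (fun k => Real.exp (-τ * ev k)) *
            (V * (U * (Matrix.diagonal (fun k => Real.exp (-τ * ev k)) * V)))) := by
          simp only [Matrix.mul_assoc]
      _ = U * (Matrix.diagonal (fun k => Real.exp (-τ * ev k)) *
            (Matrix.diagonal (fun k => Real.exp (-τ * ev k)) * V)) := by
          rw [← Matrix.mul_assoc V U, hVU, Matrix.one_mul]
      _ = U * Matrix.diagonal (fun k => Real.exp (-2 * ev k * τ)) * V := by
          rw [← Matrix.mul_assoc (Matrix.diagonal _) (Matrix.diagonal _) V, hDD,
            ← Matrix.mul_assoc]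
  -- entry formula
  have hentry : ∀ (d : Fin n → ℝ) (i : Fin n),
      (U * Matrix.diagonal d * V) i i = ∑ k, U i k * U i k * d k := by
    intro d i
    rw [Matrix.mul_apply]
    refine Finset.sum_congr rfl fun k _ => ?_
    rw [Matrix.mul_diagonal, hVdef, Matrix.star_apply, star_trivial]
    ring
  -- columns are unit vectors
  have hcol : ∀ k, ∑ i, U i k * U i k = 1 := by
    intro k
    have h : (V * U) k k = (1 : Matrix (Fin n) (Fin n) ℝ) k k := by rw [hVU]
    rw [Matrix.mul_apply, Matrix.one_apply_eq] at h
    rw [← h]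
    refine Finset.sum_congr rfl fun i _ => ?_
    rw [hVdef, Matrix.star_apply, star_trivial]
  -- eigenvalue facts
  have hnonneg : ∀ k, 0 ≤ ev k := fun k => hPSD.eigenvalues_nonneg k
  have hconst : ∀ k, ev k = 0 → ∃ c : ℝ, ((fun i => U i k) = fun _ => c) ∧ c ≠ 0 := by
    intro k hk
    have hbcol : (fun i => U i k) = ⇑(hH.eigenvectorBasis k) := by
      funext i
      exact hH.eigenvectorUnitary_apply i k
    have hvec : L *ᵥ (fun i => U i k) = 0 := by
      rw [hbcol, hH.mulVec_eigenvectorBasis, ← hev, hk, zero_smul]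
    obtain ⟨c, hc⟩ := hker _ hvec
    refine ⟨c, hc, fun hc0 => ?_⟩
    have h1' := hcol k
    have hcval : ∀ i, U i k = c := fun i => congr_fun hc i
    rw [hc0] at hcval
    simp [hcval] at h1'
  have huniq : ∀ k k', ev k = 0 → ev k' = 0 → k = k' := by
    intro k k' hk hk'
    by_contra hne
    obtain ⟨c, hc, hc0⟩ := hconst k hk
    obtain ⟨c', hc', hc0'⟩ := hconst k' hk'
    have horth : (V * U) k k' = 0 := by rw [hVU]; exact Matrix.one_apply_ne hne
    rw [Matrix.mul_apply] at horth
    have horth' : ∑ i, U i k * U i k' = 0 := by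
      rw [← horth]
      refine Finset.sum_congr rfl fun i _ => ?_
      rw [hVdef, Matrix.star_apply, star_trivial]
    have hcval : ∀ i, U i k = c := fun i => congr_fun hc i
    have hcval' : ∀ i, U i k' = c' := fun i => congr_fun hc' i
    simp only [hcval, hcval', Finset.sum_const, Finset.card_univ, Fintype.card_fin,
      nsmul_eq_mul] at horth'
    rcases mul_eq_zero.mp horth' with h | h
    · exact hnn h
    · rcases mul_eq_zero.mp h with h' | h'
      · exact hc0 h'
      · exact hc0' h'
  have hex : ∃ k, ev k = 0 := by
    by_contra h
    push_neg at h
    have hw0 : (V *ᵥ fun _ => (1:ℝ)) = 0 := by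
      funext m
      rcases mul_eq_zero.mp (hw m) with h' | h'
      · exact absurd h' (h m)
      · exact h'
    have hone : (fun _ => (1:ℝ)) = (0 : Fin n → ℝ) := by
      have h2 : U *ᵥ (V *ᵥ fun _ => (1:ℝ)) = fun _ => (1:ℝ) := by
        rw [Matrix.mulVec_mulVec, hUV, Matrix.one_mulVec]
      rw [hw0, Matrix.mulVec_zero] at h2
      exact h2.symm
    exact one_ne_zero (congr_fun hone ⟨0, hn⟩)
  obtain ⟨k₀, hk₀⟩ := hex
  have hσ0 : ev (σ 0) = 0 := by
    have hle : (0 : Fin n) ≤ σ.symm k₀ := by simp [Fin.le_def]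
    have hm := Tuple.monotone_sort ev hle
    simp only [Function.comp_apply, ← hσ, Equiv.apply_symm_apply, hk₀] at hm
    exact le_antisymm hm (hnonneg _)
  have hpos : ∀ i : Fin n, 1 ≤ (i : ℕ) → 0 < ev (σ i) := by
    intro i hi
    rcases (hnonneg (σ i)).lt_or_eq with h | h
    · exact h
    · exfalso
      have h2 : σ i = σ 0 := huniq _ _ h.symm hσ0
      have h3 : i = 0 := σ.injective h2
      rw [h3] at hi
      simp at hi
  have hsorted : sortedEigenvalues L = fun i => ev (σ i) := by
    unfold sortedEigenvalues
    rw [dif_pos hH]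
    rfl
  -- main computation
  simp only [hsorted]
  simp only [hmul]
  simp only [Matrix.sub_apply, hentry, Matrix.smul_apply, Jmat, Matrix.of_apply,
    smul_eq_mul, mul_one]
  rw [← intervalIntegral.integral_finset_sum (fun i _ => by
    apply Continuous.intervalIntegrable
    fun_prop)]
  have key : ∀ τ : ℝ,
      (∑ i : Fin n, (∑ k, U i k * U i k * Real.exp (-2 * ev k * τ) - 1 / (n : ℝ)))
        = ∑ k ∈ Finset.univ.filter (fun i : Fin n => 1 ≤ (i : ℕ)),
            Real.exp (-2 * ev (σ k) * τ) := by
    intro τ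
    rw [Finset.sum_sub_distrib, Finset.sum_comm]
    have h5 : (∑ k : Fin n, ∑ i : Fin n, U i k * U i k * Real.exp (-2 * ev k * τ))
        = ∑ k : Fin n, Real.exp (-2 * ev k * τ) :=
      Finset.sum_congr rfl fun k _ => by rw [← Finset.sum_mul, hcol k, one_mul]
    rw [h5]
    rw [Finset.sum_const, Finset.card_univ, Fintype.card_fin, nsmul_eq_mul, mul_one_div,
      div_self hnn]
    rw [← Equiv.sum_comp σ (fun k => Real.exp (-2 * ev k * τ))]
    rw [← Finset.sum_filter_add_sum_filter_not Finset.univ (fun i : Fin n => 1 ≤ (i : ℕ))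
      (fun k => Real.exp (-2 * ev (σ k) * τ))]
    have hfilt : Finset.univ.filter (fun i : Fin n => ¬ 1 ≤ (i : ℕ)) = {(0 : Fin n)} := by
      ext i
      simp only [Finset.mem_filter, Finset.mem_univ, true_and, Finset.mem_singleton,
        not_le, Nat.lt_one_iff, ← Fin.val_eq_val, Fin.val_zero]
    rw [hfilt, Finset.sum_singleton, hσ0]
    norm_num
  rw [intervalIntegral.integral_congr (g := fun τ =>
    ∑ k ∈ Finset.univ.filter (fun i : Fin n => 1 ≤ (i : ℕ)), Real.exp (-2 * ev (σ k) * τ))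
    (fun τ _ => key τ)]
  rw [intervalIntegral.integral_finset_sum (fun k _ => by
    apply Continuous.intervalIntegrable
    fun_prop)]
  refine Finset.sum_congr rfl fun k hk => ?_
  have hk' : 0 < ev (σ k) := hpos k (Finset.mem_filter.mp hk).2
  exact integral_exp_neg_two_mul (ev (σ k)) t hk'.ne'
end

section
/- Let L be the Laplacian of a connected weighted graph on n nodes, write L̄ = L + (1/n)J and L^† = L̄⁻¹ − (1/n)J. Then P = (1/2) L^† is the controllability Gramian of the disagreement form of the consensus network, i.e., it solves the Lyapunov equation L̄ P + P L̄ = I − (1/n)J. Equivalently, (L + (1/n)J) L^† + L^† (L + (1/n)J) = 2(I − (1/n)J). -/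
open Filter Finset Matrix

/-- Moore–Penrose pseudoinverse of a connected-graph Laplacian:
`L^† = (L + (1/n) J)⁻¹ − (1/n) J`. -/
noncomputable def lapPinv {n : ℕ} (L : Matrix (Fin n) (Fin n) ℝ) : Matrix (Fin n) (Fin n) ℝ :=
  (L + (1 / (n : ℝ)) • Jmat n)⁻¹ - (1 / (n : ℝ)) • Jmat n

/-- `P = (1/2) L^†` solves the Lyapunov equation of the disagreement network:
`(L + (1/n)J) L^† + L^† (L + (1/n)J) = 2(I − (1/n)J)`. -/
theorem lapPinv_solves_lyapunov {n : ℕ} (hn : 0 < n)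
    (L : Matrix (Fin n) (Fin n) ℝ) (hL : IsConnLaplacian L) :
    (L + (1 / (n : ℝ)) • Jmat n) * lapPinv L + lapPinv L * (L + (1 / (n : ℝ)) • Jmat n) =
      (2 : ℝ) • ((1 : Matrix (Fin n) (Fin n) ℝ) - (1 / (n : ℝ)) • Jmat n) := by
  obtain ⟨hpsd, hone, hker⟩ := hL
  set c : ℝ := 1 / (n : ℝ) with hc
  have hnR : (0:ℝ) < n := by exact_mod_cast hn
  have hcpos : (0:ℝ) < c := by rw [hc]; positivity
  have hsym : ∀ i j, L i j = L j i := by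
    intro i j
    have := congrFun (congrFun hpsd.1 i) j
    simpa [Matrix.conjTranspose_apply] using this.symm
  set M : Matrix (Fin n) (Fin n) ℝ := L + c • Jmat n with hM
  have hLJ : L * Jmat n = 0 := by
    ext i j
    have := congrFun hone i
    simpa [Matrix.mul_apply, Jmat, Matrix.mulVec, dotProduct] using this
  have hJL : Jmat n * L = 0 := by
    ext i j
    have := congrFun hone j
    simp only [Matrix.mul_apply, Jmat, Matrix.of_apply, one_mul, Matrix.zero_apply]
    calc ∑ k, L k j = ∑ k, L j k := Finset.sum_congr rfl fun k _ => hsym k j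
    _ = 0 := by simpa [Matrix.mulVec, dotProduct] using this
  have hJJ : Jmat n * Jmat n = (n : ℝ) • Jmat n := by
    ext i j; simp [Matrix.mul_apply, Jmat]
  have hMJ : M * Jmat n = Jmat n := by
    rw [hM, Matrix.add_mul, hLJ, Matrix.smul_mul, hJJ, smul_smul, hc]
    field_simp
    rw [zero_add, one_smul]
  have hJM : Jmat n * M = Jmat n := by
    rw [hM, Matrix.mul_add, hJL, Matrix.mul_smul, hJJ, smul_smul, hc]
    field_simp
    rw [zero_add, one_smul]
  have hJmulVec : ∀ x : Fin n → ℝ, Jmat n *ᵥ x = fun _ => ∑ k, x k := by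
    intro x; ext i; simp [Jmat, Matrix.mulVec, dotProduct]
  have hPD : M.PosDef := by
    rw [Matrix.posDef_iff_dotProduct_mulVec]
    constructor
    · ext i j
      simp only [Matrix.conjTranspose_apply, hM, Matrix.add_apply, Matrix.smul_apply, Jmat,
        Matrix.of_apply, star_trivial]
      rw [hsym j i]
    · intro x hx
      have hexp : star x ⬝ᵥ M *ᵥ x = x ⬝ᵥ L *ᵥ x + c * (∑ k, x k)^2 := by
        rw [hM, Matrix.add_mulVec, dotProduct_add, Matrix.smul_mulVec, hJmulVec,
          dotProduct_smul]
        simp only [star_trivial, smul_eq_mul]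
        congr 1
        simp [dotProduct, sq, Finset.sum_mul]
      rw [hexp]
      have h1 : 0 ≤ x ⬝ᵥ L *ᵥ x := by simpa using (Matrix.posSemidef_iff_dotProduct_mulVec.mp hpsd).2 x
      have h2 : 0 ≤ c * (∑ k, x k)^2 := by positivity
      refine lt_of_le_of_ne (by linarith) (fun h0 => ?_)
      have hLzero : x ⬝ᵥ L *ᵥ x = 0 := by nlinarith
      have hSzero : c * (∑ k, x k)^2 = 0 := by linarith
      have hS : (∑ k, x k) = 0 := by
        rcases mul_eq_zero.mp hSzero with h | h
        · exact absurd h hcpos.ne'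
        · exact pow_eq_zero_iff (by norm_num) |>.mp h
      have hLx : L *ᵥ x = 0 := (hpsd.dotProduct_mulVec_zero_iff x).mp (by simpa using hLzero)
      obtain ⟨a, ha⟩ := hker x hLx
      rw [ha] at hS
      simp [Finset.sum_const] at hS
      rcases hS with h' | h'
      · omega
      · exact hx (by rw [ha, h']; rfl)
  have hdet : IsUnit M.det := isUnit_iff_ne_zero.mpr hPD.det_pos.ne'
  have hMinv : M * M⁻¹ = 1 := Matrix.mul_nonsing_inv M hdet
  have hinvM : M⁻¹ * M = 1 := Matrix.nonsing_inv_mul M hdet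
  show M * (M⁻¹ - c • Jmat n) + (M⁻¹ - c • Jmat n) * M = _
  rw [Matrix.mul_sub, Matrix.sub_mul, hMinv, hinvM, Matrix.mul_smul, Matrix.smul_mul,
    hMJ, hJM, two_smul]
end
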